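/- arXiv:1411.5058 — 5 statements merged into one kernel-verified Lean document; each statement's English description precedes it below -/
import Mathlib

section
/- Let A₁, A₂, A₃ be symmetric positive semidefinite matrices with A₁ + A₂ + A₃ ≤ I. Then the average over all 6 permutations σ of {1,2,3} of A_{σ(1)}A_{σ(2)}A_{σ(3)} is at most (1/27)·I in the Loewner order. -/
open Matrix ComplexConjugate

/-- A nonnegative scalar multiple of a positive semidefinite real matrix is
positive semidefinite. -/
lemma psd_smul_nonneg {m : Type*} [Fintype m] {M : Matrix m m ℝ}
    (hM : M.PosSemidef) {c : ℝ} (hc : 0 ≤ c) : (c • M).PosSemidef := by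
  constructor
  · unfold Matrix.IsHermitian
    rw [Matrix.conjTranspose_smul, hM.1.eq]
    simp
  · intro x
    exact (hM.smul hc).2 x

/-- Congruence of a PSD matrix by a symmetric matrix (real case). -/
lemma psd_congr {m : Type*} [Fintype m] {M L : Matrix m m ℝ}
    (hM : M.PosSemidef) (hL : Lᴴ = L) : (L * M * L).PosSemidef := by
  have := hM.conjTranspose_mul_mul_same L
  rwa [hL] at this

set_option maxHeartbeats 4000000 in
theorem stmt7 {n : ℕ} (A : Fin 3 → Matrix (Fin n) (Fin n) ℝ)
    (hA : ∀ i, (A i).PosSemidef)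
    (hsum : ((1 : Matrix (Fin n) (Fin n) ℝ) - (A 0 + A 1 + A 2)).PosSemidef) :
    ((1 / 27 : ℝ) • (1 : Matrix (Fin n) (Fin n) ℝ) -
      (1 / 6 : ℝ) • ∑ σ : Equiv.Perm (Fin 3), A (σ 0) * A (σ 1) * A (σ 2)).PosSemidef := by
  have h0 := (hA 0).1.eq
  have h1 := (hA 1).1.eq
  have h2 := (hA 2).1.eq
  -- abbreviations
  set A0 := A 0 with hA0
  set A1 := A 1 with hA1
  set A2 := A 2 with hA2
  -- the twelve congruence vectors
  set L1 : Matrix (Fin n) (Fin n) ℝ := 1 - (7/6 : ℝ) • A0 - (11/12 : ℝ) • A1 - (11/12 : ℝ) • A2 with hL1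
  set L2 : Matrix (Fin n) (Fin n) ℝ := A0 - (1/2 : ℝ) • A1 - (1/2 : ℝ) • A2 with hL2
  set L3 : Matrix (Fin n) (Fin n) ℝ := A1 - A2 with hL3
  set L4 : Matrix (Fin n) (Fin n) ℝ := 1 - (11/12 : ℝ) • A0 - (7/6 : ℝ) • A1 - (11/12 : ℝ) • A2 with hL4
  set L5 : Matrix (Fin n) (Fin n) ℝ := A1 - (1/2 : ℝ) • A0 - (1/2 : ℝ) • A2 with hL5
  set L6 : Matrix (Fin n) (Fin n) ℝ := A0 - A2 with hL6
  set L7 : Matrix (Fin n) (Fin n) ℝ := 1 - (11/12 : ℝ) • A0 - (11/12 : ℝ) • A1 - (7/6 : ℝ) • A2 with hL7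
  set L8 : Matrix (Fin n) (Fin n) ℝ := A2 - (1/2 : ℝ) • A0 - (1/2 : ℝ) • A1 with hL8
  set L9 : Matrix (Fin n) (Fin n) ℝ := A1 - A0 with hL9
  set K1 : Matrix (Fin n) (Fin n) ℝ := 1 - (5/2 : ℝ) • A0 - (5/2 : ℝ) • A1 - (5/2 : ℝ) • A2 with hK1
  set K2 : Matrix (Fin n) (Fin n) ℝ := A0 - (1/11 : ℝ) • A1 - (1/11 : ℝ) • A2 with hK2
  set K3 : Matrix (Fin n) (Fin n) ℝ := A1 - (1/10 : ℝ) • A2 with hK3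
  set D : Matrix (Fin n) (Fin n) ℝ := 1 - (A0 + A1 + A2) with hD
  have hDpsd : D.PosSemidef := hsum
  -- all the L's are symmetric
  have hsym : ∀ L : Matrix (Fin n) (Fin n) ℝ,
      (∃ a b c d : ℝ, L = a • (1 : Matrix (Fin n) (Fin n) ℝ) + b • A0 + c • A1 + d • A2) →
      Lᴴ = L := by
    rintro L ⟨a, b, c, d, rfl⟩
    simp only [Matrix.conjTranspose_add, Matrix.conjTranspose_smul, Matrix.conjTranspose_one,
      h0, h1, h2, star_trivial]
  have eL1 : L1ᴴ = L1 := hsym _ ⟨1, -(7/6), -(11/12), -(11/12), by rw [hL1]; module⟩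
  have eL2 : L2ᴴ = L2 := hsym _ ⟨0, 1, -(1/2), -(1/2), by rw [hL2]; module⟩
  have eL3 : L3ᴴ = L3 := hsym _ ⟨0, 0, 1, -1, by rw [hL3]; module⟩
  have eL4 : L4ᴴ = L4 := hsym _ ⟨1, -(11/12), -(7/6), -(11/12), by rw [hL4]; module⟩
  have eL5 : L5ᴴ = L5 := hsym _ ⟨0, -(1/2), 1, -(1/2), by rw [hL5]; module⟩
  have eL6 : L6ᴴ = L6 := hsym _ ⟨0, 1, 0, -1, by rw [hL6]; module⟩
  have eL7 : L7ᴴ = L7 := hsym _ ⟨1, -(11/12), -(11/12), -(7/6), by rw [hL7]; module⟩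
  have eL8 : L8ᴴ = L8 := hsym _ ⟨0, -(1/2), -(1/2), 1, by rw [hL8]; module⟩
  have eL9 : L9ᴴ = L9 := hsym _ ⟨0, -1, 1, 0, by rw [hL9]; module⟩
  have eK1 : K1ᴴ = K1 := hsym _ ⟨1, -(5/2), -(5/2), -(5/2), by rw [hK1]; module⟩
  have eK2 : K2ᴴ = K2 := hsym _ ⟨0, 1, -(1/11), -(1/11), by rw [hK2]; module⟩
  have eK3 : K3ᴴ = K3 := hsym _ ⟨0, 0, 1, -(1/10), by rw [hK3]; module⟩
  have eA2 : A2ᴴ = A2 := h2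
  -- the PSD certificate pieces
  have p1 := psd_smul_nonneg (psd_congr (hA 0) eL1) (by norm_num : (0:ℝ) ≤ 2/9)
  have p2 := psd_smul_nonneg (psd_congr (hA 0) eL2) (by norm_num : (0:ℝ) ≤ 5/162)
  have p3 := psd_smul_nonneg (psd_congr (hA 0) eL3) (by norm_num : (0:ℝ) ≤ 5/36)
  have p4 := psd_smul_nonneg (psd_congr (hA 1) eL4) (by norm_num : (0:ℝ) ≤ 2/9)
  have p5 := psd_smul_nonneg (psd_congr (hA 1) eL5) (by norm_num : (0:ℝ) ≤ 5/162)
  have p6 := psd_smul_nonneg (psd_congr (hA 1) eL6) (by norm_num : (0:ℝ) ≤ 5/36)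
  have p7 := psd_smul_nonneg (psd_congr (hA 2) eL7) (by norm_num : (0:ℝ) ≤ 2/9)
  have p8 := psd_smul_nonneg (psd_congr (hA 2) eL8) (by norm_num : (0:ℝ) ≤ 5/162)
  have p9 := psd_smul_nonneg (psd_congr (hA 2) eL9) (by norm_num : (0:ℝ) ≤ 5/36)
  have q1 := psd_smul_nonneg (psd_congr hDpsd eK1) (by norm_num : (0:ℝ) ≤ 1/27)
  have q2 := psd_smul_nonneg (psd_congr hDpsd eK2) (by norm_num : (0:ℝ) ≤ 11/108)
  have q3 := psd_smul_nonneg (psd_congr hDpsd eK3) (by norm_num : (0:ℝ) ≤ 10/99)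
  have q4 := psd_smul_nonneg (psd_congr hDpsd eA2) (by norm_num : (0:ℝ) ≤ 1/10)
  -- expand the sum over permutations
  have hset : (Finset.univ : Finset (Equiv.Perm (Fin 3))) =
      {1, Equiv.swap 0 1, Equiv.swap 0 2, Equiv.swap 1 2,
        Equiv.swap 0 1 * Equiv.swap 1 2, Equiv.swap 1 2 * Equiv.swap 0 1} := by decide
  have hsum6 : ∑ σ : Equiv.Perm (Fin 3), A (σ 0) * A (σ 1) * A (σ 2) =
      A0 * A1 * A2 + A1 * A0 * A2 + A2 * A1 * A0 + A0 * A2 * A1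
        + A1 * A2 * A0 + A2 * A0 * A1 := by
    rw [hset, Finset.sum_insert (by decide), Finset.sum_insert (by decide),
      Finset.sum_insert (by decide), Finset.sum_insert (by decide),
      Finset.sum_insert (by decide), Finset.sum_singleton]
    rw [show ((1 : Equiv.Perm (Fin 3)) 0) = 0 from by decide,
      show ((1 : Equiv.Perm (Fin 3)) 1) = 1 from by decide,
      show ((1 : Equiv.Perm (Fin 3)) 2) = 2 from by decide,
      show ((Equiv.swap 0 1 : Equiv.Perm (Fin 3)) 0) = 1 from by decide,
      show ((Equiv.swap 0 1 : Equiv.Perm (Fin 3)) 1) = 0 from by decide,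
      show ((Equiv.swap 0 1 : Equiv.Perm (Fin 3)) 2) = 2 from by decide,
      show ((Equiv.swap 0 2 : Equiv.Perm (Fin 3)) 0) = 2 from by decide,
      show ((Equiv.swap 0 2 : Equiv.Perm (Fin 3)) 1) = 1 from by decide,
      show ((Equiv.swap 0 2 : Equiv.Perm (Fin 3)) 2) = 0 from by decide,
      show ((Equiv.swap 1 2 : Equiv.Perm (Fin 3)) 0) = 0 from by decide,
      show ((Equiv.swap 1 2 : Equiv.Perm (Fin 3)) 1) = 2 from by decide,
      show ((Equiv.swap 1 2 : Equiv.Perm (Fin 3)) 2) = 1 from by decide,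
      show ((Equiv.swap 0 1 * Equiv.swap 1 2 : Equiv.Perm (Fin 3)) 0) = 1 from by decide,
      show ((Equiv.swap 0 1 * Equiv.swap 1 2 : Equiv.Perm (Fin 3)) 1) = 2 from by decide,
      show ((Equiv.swap 0 1 * Equiv.swap 1 2 : Equiv.Perm (Fin 3)) 2) = 0 from by decide,
      show ((Equiv.swap 1 2 * Equiv.swap 0 1 : Equiv.Perm (Fin 3)) 0) = 2 from by decide,
      show ((Equiv.swap 1 2 * Equiv.swap 0 1 : Equiv.Perm (Fin 3)) 1) = 0 from by decide,
      show ((Equiv.swap 1 2 * Equiv.swap 0 1 : Equiv.Perm (Fin 3)) 2) = 1 from by decide]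
    rw [← hA0, ← hA1, ← hA2]
    noncomm_ring
  -- main algebraic identity : the certificate
  have key : (1 / 27 : ℝ) • (1 : Matrix (Fin n) (Fin n) ℝ) -
      (1 / 6 : ℝ) • (A0 * A1 * A2 + A1 * A0 * A2 + A2 * A1 * A0 + A0 * A2 * A1
        + A1 * A2 * A0 + A2 * A0 * A1) =
      (2/9 : ℝ) • (L1 * A0 * L1) + (5/162 : ℝ) • (L2 * A0 * L2) + (5/36 : ℝ) • (L3 * A0 * L3)
      + (2/9 : ℝ) • (L4 * A1 * L4) + (5/162 : ℝ) • (L5 * A1 * L5) + (5/36 : ℝ) • (L6 * A1 * L6)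
      + (2/9 : ℝ) • (L7 * A2 * L7) + (5/162 : ℝ) • (L8 * A2 * L8) + (5/36 : ℝ) • (L9 * A2 * L9)
      + (1/27 : ℝ) • (K1 * D * K1) + (11/108 : ℝ) • (K2 * D * K2)
      + (10/99 : ℝ) • (K3 * D * K3) + (1/10 : ℝ) • (A2 * D * A2) := by
    rw [hL1, hL2, hL3, hL4, hL5, hL6, hL7, hL8, hL9, hK1, hK2, hK3, hD]
    noncomm_ring
    module
  rw [hsum6, key]
  exact (((((((((((p1.add p2).add p3).add p4).add p5).add p6).add p7).add p8).add
    p9).add q1).add q2).add q3).add q4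
end

section
/- Let A₁, A₂, A₃ be symmetric positive semidefinite matrices with A₁ + A₂ + A₃ ≤ I. Then the average over all 6 permutations σ of {1,2,3} of A_{σ(1)}A_{σ(2)}A_{σ(3)} is at least -(1/27)·I in the Loewner order. -/
open Matrix

private lemma psd_smul' {n : ℕ} {M : Matrix (Fin n) (Fin n) ℝ} (hM : M.PosSemidef) {c : ℝ}
    (hc : 0 ≤ c) : (c • M).PosSemidef := by
  constructor
  · unfold Matrix.IsHermitian
    rw [Matrix.conjTranspose_smul, hM.1.eq, star_trivial]
  · intro x
    exact (hM.smul hc).2 x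

private lemma psd_sand {n : ℕ} {P Y : Matrix (Fin n) (Fin n) ℝ} (hP : P.PosSemidef)
    (hY : Yᴴ = Y) : (Y * P * Y).PosSemidef := by
  have := hP.mul_mul_conjTranspose_same Y
  rwa [hY] at this

private lemma psd_omul {n : ℕ} {M : Matrix (Fin n) (Fin n) ℝ} (hM : M.PosSemidef) (k : ℕ)
    [k.AtLeastTwo] : ((OfNat.ofNat k : Matrix (Fin n) (Fin n) ℝ) * M).PosSemidef := by
  have h : (OfNat.ofNat k : Matrix (Fin n) (Fin n) ℝ) * M = (OfNat.ofNat k : ℝ) • M := by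
    rw [Algebra.smul_def, map_ofNat]
  rw [h]
  exact psd_smul' hM (by rw [← Nat.cast_ofNat]; exact Nat.cast_nonneg _)

theorem stmt9 {n : ℕ} (A : Fin 3 → Matrix (Fin n) (Fin n) ℝ)
    (hA : ∀ i, (A i).PosSemidef)
    (hsum : ((1 : Matrix (Fin n) (Fin n) ℝ) - (A 0 + A 1 + A 2)).PosSemidef) :
    ((1 / 6 : ℝ) • ∑ σ : Equiv.Perm (Fin 3), A (σ 0) * A (σ 1) * A (σ 2) +
      (1 / 27 : ℝ) • (1 : Matrix (Fin n) (Fin n) ℝ)).PosSemidef := by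
  have hperm : ∑ σ : Equiv.Perm (Fin 3), A (σ 0) * A (σ 1) * A (σ 2) =
      A 0 * A 1 * A 2 + A 0 * A 2 * A 1 + A 1 * A 0 * A 2 + A 1 * A 2 * A 0 +
      A 2 * A 0 * A 1 + A 2 * A 1 * A 0 := by
    rw [show (Finset.univ : Finset (Equiv.Perm (Fin 3))) =
      {1, Equiv.swap 1 2, Equiv.swap 0 1, Equiv.swap 0 1 * Equiv.swap 1 2,
       Equiv.swap 0 2, Equiv.swap 0 2 * Equiv.swap 1 2} from by decide]
    rw [Finset.sum_insert (by decide), Finset.sum_insert (by decide),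
        Finset.sum_insert (by decide), Finset.sum_insert (by decide),
        Finset.sum_insert (by decide), Finset.sum_singleton]
    have h : ∀ (σ : Equiv.Perm (Fin 3)) (i j : Fin 3), σ i = j → A (σ i) = A j := by
      intro σ i j h; rw [h]
    rw [h 1 0 0 (by decide), h 1 1 1 (by decide), h 1 2 2 (by decide),
        h (Equiv.swap 1 2) 0 0 (by decide), h (Equiv.swap 1 2) 1 2 (by decide),
        h (Equiv.swap 1 2) 2 1 (by decide),
        h (Equiv.swap 0 1) 0 1 (by decide), h (Equiv.swap 0 1) 1 0 (by decide),
        h (Equiv.swap 0 1) 2 2 (by decide),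
        h (Equiv.swap 0 1 * Equiv.swap 1 2) 0 1 (by decide),
        h (Equiv.swap 0 1 * Equiv.swap 1 2) 1 2 (by decide),
        h (Equiv.swap 0 1 * Equiv.swap 1 2) 2 0 (by decide),
        h (Equiv.swap 0 2) 0 2 (by decide), h (Equiv.swap 0 2) 1 1 (by decide),
        h (Equiv.swap 0 2) 2 0 (by decide),
        h (Equiv.swap 0 2 * Equiv.swap 1 2) 0 2 (by decide),
        h (Equiv.swap 0 2 * Equiv.swap 1 2) 1 0 (by decide),
        h (Equiv.swap 0 2 * Equiv.swap 1 2) 2 1 (by decide)]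
    abel
  rw [hperm]
  set a := A 0 with ha'
  set b := A 1 with hb'
  set c := A 2 with hc'
  have hpa : a.PosSemidef := hA 0
  have hpb : b.PosSemidef := hA 1
  have hpc : c.PosSemidef := hA 2
  have haH : aᴴ = a := hpa.1.eq
  have hbH : bᴴ = b := hpb.1.eq
  have hcH : cᴴ = c := hpc.1.eq
  have hpE : ((1 : Matrix (Fin n) (Fin n) ℝ) - a - b - c).PosSemidef := by
    have h1 : (1 : Matrix (Fin n) (Fin n) ℝ) - (a + b + c) = 1 - a - b - c := by abel
    rwa [h1] at hsum
  have haT : aᵀ = a := by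
    ext i j; have := congrFun (congrFun haH i) j
    simpa [Matrix.conjTranspose_apply] using this
  have hbT : bᵀ = b := by
    ext i j; have := congrFun (congrFun hbH i) j
    simpa [Matrix.conjTranspose_apply] using this
  have hcT : cᵀ = c := by
    ext i j; have := congrFun (congrFun hcH i) j
    simpa [Matrix.conjTranspose_apply] using this
  have symY1a : ((4 : Matrix (Fin n) (Fin n) ℝ) - 6*a + 3*b + 3*c)ᴴ = 4 - 6*a + 3*b + 3*c := by
    simp [Matrix.conjTranspose_add, Matrix.conjTranspose_sub, Matrix.conjTranspose_mul,
      Matrix.conjTranspose_ofNat, haH, hbH, hcH, haT, hbT, hcT]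
    all_goals noncomm_ring
  have symY1b : ((4 : Matrix (Fin n) (Fin n) ℝ) - 6*b + 3*c + 3*a)ᴴ = 4 - 6*b + 3*c + 3*a := by
    simp [Matrix.conjTranspose_add, Matrix.conjTranspose_sub, Matrix.conjTranspose_mul,
      Matrix.conjTranspose_ofNat, haH, hbH, hcH, haT, hbT, hcT]
    all_goals noncomm_ring
  have symY1c : ((4 : Matrix (Fin n) (Fin n) ℝ) - 6*c + 3*a + 3*b)ᴴ = 4 - 6*c + 3*a + 3*b := by
    simp [Matrix.conjTranspose_add, Matrix.conjTranspose_sub, Matrix.conjTranspose_mul,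
      Matrix.conjTranspose_ofNat, haH, hbH, hcH, haT, hbT, hcT]
    all_goals noncomm_ring
  have symY2a : ((2 : Matrix (Fin n) (Fin n) ℝ)*a - b - c)ᴴ = 2*a - b - c := by
    simp [Matrix.conjTranspose_add, Matrix.conjTranspose_sub, Matrix.conjTranspose_mul,
      Matrix.conjTranspose_ofNat, haH, hbH, hcH, haT, hbT, hcT]
    all_goals noncomm_ring
  have symY2b : ((2 : Matrix (Fin n) (Fin n) ℝ)*b - c - a)ᴴ = 2*b - c - a := by
    simp [Matrix.conjTranspose_add, Matrix.conjTranspose_sub, Matrix.conjTranspose_mul,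
      Matrix.conjTranspose_ofNat, haH, hbH, hcH, haT, hbT, hcT]
    all_goals noncomm_ring
  have symY2c : ((2 : Matrix (Fin n) (Fin n) ℝ)*c - a - b)ᴴ = 2*c - a - b := by
    simp [Matrix.conjTranspose_add, Matrix.conjTranspose_sub, Matrix.conjTranspose_mul,
      Matrix.conjTranspose_ofNat, haH, hbH, hcH, haT, hbT, hcT]
    all_goals noncomm_ring
  have symY3a : (b + c)ᴴ = b + c := by
    simp [Matrix.conjTranspose_add, hbH, hcH, hbT, hcT]
  have symY3b : (c + a)ᴴ = c + a := by
    simp [Matrix.conjTranspose_add, haH, hcH, haT, hcT]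
  have symY3c : (a + b)ᴴ = a + b := by
    simp [Matrix.conjTranspose_add, haH, hbH, haT, hbT]
  have symD1 : (a - b)ᴴ = a - b := by
    simp [Matrix.conjTranspose_sub, haH, hbH, haT, hbT]
  have symD2 : (a - c)ᴴ = a - c := by
    simp [Matrix.conjTranspose_sub, haH, hcH, haT, hcT]
  have symD3 : (b - c)ᴴ = b - c := by
    simp [Matrix.conjTranspose_sub, hbH, hcH, hbT, hcT]
  have cert : 72 * (a*b*c + a*c*b + b*a*c + b*c*a + c*a*b + c*b*a) + 16 =
      (4 - 6*a + 3*b + 3*c) * a * (4 - 6*a + 3*b + 3*c)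
      + 3 * ((2*a - b - c) * a * (2*a - b - c)) + 36 * ((b + c) * a * (b + c))
      + ((4 - 6*b + 3*c + 3*a) * b * (4 - 6*b + 3*c + 3*a)
      + 3 * ((2*b - c - a) * b * (2*b - c - a)) + 36 * ((c + a) * b * (c + a)))
      + ((4 - 6*c + 3*a + 3*b) * c * (4 - 6*c + 3*a + 3*b)
      + 3 * ((2*c - a - b) * c * (2*c - a - b)) + 36 * ((a + b) * c * (a + b)))
      + 16 * (1 - a - b - c)
      + 24 * ((a - b) * (1 - a - b - c) * (a - b))
      + 24 * ((a - c) * (1 - a - b - c) * (a - c))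
      + 24 * ((b - c) * (1 - a - b - c) * (b - c)) := by
    noncomm_ring
    simp [nsmul_eq_mul]
  have hRHS : ((4 - 6*a + 3*b + 3*c) * a * (4 - 6*a + 3*b + 3*c)
      + 3 * ((2*a - b - c) * a * (2*a - b - c)) + 36 * ((b + c) * a * (b + c))
      + ((4 - 6*b + 3*c + 3*a) * b * (4 - 6*b + 3*c + 3*a)
      + 3 * ((2*b - c - a) * b * (2*b - c - a)) + 36 * ((c + a) * b * (c + a)))
      + ((4 - 6*c + 3*a + 3*b) * c * (4 - 6*c + 3*a + 3*b)
      + 3 * ((2*c - a - b) * c * (2*c - a - b)) + 36 * ((a + b) * c * (a + b)))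
      + 16 * (1 - a - b - c)
      + 24 * ((a - b) * (1 - a - b - c) * (a - b))
      + 24 * ((a - c) * (1 - a - b - c) * (a - c))
      + 24 * ((b - c) * (1 - a - b - c) * (b - c))).PosSemidef := by
    refine (((((((((psd_sand hpa symY1a).add
      (psd_omul (psd_sand hpa symY2a) 3)).add
      (psd_omul (psd_sand hpa symY3a) 36)).add
      (((psd_sand hpb symY1b).add
        (psd_omul (psd_sand hpb symY2b) 3)).add
        (psd_omul (psd_sand hpb symY3b) 36))).add
      (((psd_sand hpc symY1c).add
        (psd_omul (psd_sand hpc symY2c) 3)).add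
        (psd_omul (psd_sand hpc symY3c) 36))).add
      (psd_omul hpE 16)).add
      (psd_omul (psd_sand hpE symD1) 24)).add
      (psd_omul (psd_sand hpE symD2) 24)).add
      (psd_omul (psd_sand hpE symD3) 24))
  have key : (1 / 6 : ℝ) • (a*b*c + a*c*b + b*a*c + b*c*a + c*a*b + c*b*a) +
      (1 / 27 : ℝ) • (1 : Matrix (Fin n) (Fin n) ℝ) =
      (432⁻¹ : ℝ) • (72 * (a*b*c + a*c*b + b*a*c + b*c*a + c*a*b + c*b*a) + 16) := by
    have h72 : (72 : Matrix (Fin n) (Fin n) ℝ) * (a*b*c + a*c*b + b*a*c + b*c*a + c*a*b + c*b*a)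
        = (72 : ℝ) • (a*b*c + a*c*b + b*a*c + b*c*a + c*a*b + c*b*a) := by
      rw [Algebra.smul_def, map_ofNat]
    have h16 : (16 : Matrix (Fin n) (Fin n) ℝ) = (16 : ℝ) • (1 : Matrix (Fin n) (Fin n) ℝ) := by
      rw [Algebra.smul_def, map_ofNat, mul_one]
    rw [h72, h16]
    module
  rw [key, cert]
  exact psd_smul' hRHS (by norm_num)
end

section
/- For any three symmetric positive semidefinite n×n real matrices A₁, A₂, A₃, the operator norm of ∑_{j₁,j₂,j₃=1}^{3} A_{j₁}A_{j₂}A_{j₃} divided by 27 is at least the operator norm of ∑ over all triples (j₁,j₂,j₃) of pairwise distinct indices in {1,2,3} of A_{j₁}A_{j₂}A_{j₃} divided by 6. -/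
open scoped Matrix.Norms.L2Operator

namespace Stmt10Helpers
open Matrix

variable {n : ℕ}


private lemma psd_smul {X : Matrix (Fin n) (Fin n) ℝ} (h : X.PosSemidef) {r : ℝ} (hr : 0 ≤ r) :
    (r • X).PosSemidef := by
  refine .of_dotProduct_mulVec_nonneg ?_ fun x => ?_
  · show (r • X)ᴴ = r • X
    rw [conjTranspose_smul, h.1.eq]; simp
  · rw [smul_mulVec, dotProduct_smul]
    exact mul_nonneg hr (h.dotProduct_mulVec_nonneg x)

private lemma conjpsd {X L : Matrix (Fin n) (Fin n) ℝ} (hX : X.PosSemidef) (hL : Lᴴ = L) :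
    (L * X * L).PosSemidef := by
  have := hX.conjTranspose_mul_mul_same L
  rwa [hL] at this

noncomputable def env (v : Fin n → ℝ) : ℝ := ‖(EuclideanSpace.equiv (Fin n) ℝ).symm v‖

private lemma env_nonneg (v : Fin n → ℝ) : 0 ≤ env v := norm_nonneg _

private lemma env_sq (v : Fin n → ℝ) : env v ^ 2 = v ⬝ᵥ v := by
  rw [env, EuclideanSpace.norm_eq, Real.sq_sqrt (by positivity)]
  simp [dotProduct, Real.norm_eq_abs, sq_abs, pow_two]

private lemma env_cs (v w : Fin n → ℝ) : v ⬝ᵥ w ≤ env v * env w := by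
  have h := real_inner_le_norm ((EuclideanSpace.equiv (Fin n) ℝ).symm v)
    ((EuclideanSpace.equiv (Fin n) ℝ).symm w)
  rw [PiLp.inner_apply] at h
  simpa [env, dotProduct, RCLike.inner_apply, conj_trivial, mul_comm] using h

private lemma env_mulVec (X : Matrix (Fin n) (Fin n) ℝ) (v : Fin n → ℝ) :
    env (X *ᵥ v) ≤ ‖X‖ * env v :=
  X.l2_opNorm_mulVec ((EuclideanSpace.equiv (Fin n) ℝ).symm v)

private lemma opnorm_le_of (X : Matrix (Fin n) (Fin n) ℝ) {c : ℝ} (hc : 0 ≤ c)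
    (h : ∀ v : Fin n → ℝ, env (X *ᵥ v) ≤ c * env v) : ‖X‖ ≤ c := by
  rw [Matrix.l2_opNorm_def]
  exact ContinuousLinearMap.opNorm_le_bound _ hc fun x => h x

set_option maxHeartbeats 1000000 in
lemma core {a b c : Matrix (Fin n) (Fin n) ℝ}
    (ha : a.PosSemidef) (hb : b.PosSemidef) (hc : c.PosSemidef)
    (hS : ‖a + b + c‖ ≤ 1) :
    ‖a*b*c + a*c*b + b*a*c + b*c*a + c*a*b + c*b*a‖ ≤ 2/9 := by
  set s : Matrix (Fin n) (Fin n) ℝ := a + b + c with hs_def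
  set d : Matrix (Fin n) (Fin n) ℝ := 1 - s with hd_def
  set p : Matrix (Fin n) (Fin n) ℝ :=
    a*b*c + a*c*b + b*a*c + b*c*a + c*a*b + c*b*a with hp_def
  have ha1 : aᴴ = a := ha.1
  have hb1 : bᴴ = b := hb.1
  have hc1 : cᴴ = c := hc.1
  have hconv : ∀ x : Matrix (Fin n) (Fin n) ℝ, xᴴ = xᵀ := by
    intro x; ext i j; simp [conjTranspose_apply]
  have haT : aᵀ = a := by rw [← hconv]; exact ha1
  have hbT : bᵀ = b := by rw [← hconv]; exact hb1
  have hcT : cᵀ = c := by rw [← hconv]; exact hc1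
  have hs1 : sᴴ = s := by
    rw [hs_def, hconv]; simp [transpose_add, haT, hbT, hcT]
  have hsT : sᵀ = s := by rw [← hconv]; exact hs1
  -- d is PSD
  have hd : d.PosSemidef := by
    refine .of_dotProduct_mulVec_nonneg ?_ fun x => ?_
    · show dᴴ = d
      rw [hd_def, conjTranspose_sub, conjTranspose_one, hs1]
    · have h1 : x ⬝ᵥ (s *ᵥ x) ≤ env x * env (s *ᵥ x) := env_cs _ _
      have h2 : env (s *ᵥ x) ≤ ‖s‖ * env x := env_mulVec _ _
      have h3 : (0:ℝ) ≤ env x := norm_nonneg _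
      have h4 : env x * env x = x ⬝ᵥ x := by rw [← env_sq]; ring
      have h5 : ‖s‖ * env x ≤ 1 * env x := by
        apply mul_le_mul_of_nonneg_right _ h3
        exact hS
      simp only [star_trivial, hd_def, sub_mulVec, one_mulVec, dotProduct_sub]
      nlinarith
  have hd1 : dᴴ = d := hd.1
  -- hermitian combos
  have hva : ∀ x : Matrix (Fin n) (Fin n) ℝ, xᴴ = x → ((2:ℝ)•1 - (3:ℝ)•x - s)ᴴ = (2:ℝ)•1 - (3:ℝ)•x - s := by
    intro x hx
    rw [hconv] at hx ⊢
    simp [transpose_sub, transpose_smul, transpose_one, hx, hsT]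
  have hwa : ∀ x : Matrix (Fin n) (Fin n) ℝ, xᴴ = x → ((4:ℝ)•1 + (3:ℝ)•s - (9:ℝ)•x)ᴴ = (4:ℝ)•1 + (3:ℝ)•s - (9:ℝ)•x := by
    intro x hx
    rw [hconv] at hx ⊢
    simp [transpose_sub, transpose_add, transpose_smul, transpose_one, hx, hsT]
  have hsub : ∀ x y : Matrix (Fin n) (Fin n) ℝ, xᴴ = x → yᴴ = y → (x - y)ᴴ = x - y := by
    intro x y hx hy; rw [conjTranspose_sub, hx, hy]
  have hua : ∀ x : Matrix (Fin n) (Fin n) ℝ, xᴴ = x → ((3:ℝ)•x - s)ᴴ = (3:ℝ)•x - s := by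
    intro x hx
    rw [hconv] at hx ⊢
    simp [transpose_sub, transpose_smul, hx, hsT]
  -- upper certificate
  have idU : (2/9 : ℝ) • (1 : Matrix (Fin n) (Fin n) ℝ) - p =
      (1/18 : ℝ) • (((2:ℝ)•1 - (3:ℝ)•a - s) * a * ((2:ℝ)•1 - (3:ℝ)•a - s))
    + (1/18 : ℝ) • (((2:ℝ)•1 - (3:ℝ)•b - s) * b * ((2:ℝ)•1 - (3:ℝ)•b - s))
    + (1/18 : ℝ) • (((2:ℝ)•1 - (3:ℝ)•c - s) * c * ((2:ℝ)•1 - (3:ℝ)•c - s))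
    + (5/6 : ℝ) • ((b - c) * a * (b - c))
    + (5/6 : ℝ) • ((a - c) * b * (a - c))
    + (5/6 : ℝ) • ((a - b) * c * (a - b))
    + (2/9 : ℝ) • (s * d * s)
    + (2/3 : ℝ) • (a * d * a) + (2/3 : ℝ) • (b * d * b) + (2/3 : ℝ) • (c * d * c)
    + (2/9 : ℝ) • d := by
    rw [hp_def, hd_def, hs_def]
    simp only [smul_mul_assoc, mul_smul_comm, add_mul, mul_add, sub_mul, mul_sub,
      smul_add, smul_sub, smul_smul, mul_one, one_mul]
    module
  have hU : ((2/9 : ℝ) • (1 : Matrix (Fin n) (Fin n) ℝ) - p).PosSemidef := by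
    rw [idU]
    refine (((((((((((psd_smul (conjpsd ha (hva a ha1)) (by norm_num)).add
      (psd_smul (conjpsd hb (hva b hb1)) (by norm_num))).add
      (psd_smul (conjpsd hc (hva c hc1)) (by norm_num))).add
      (psd_smul (conjpsd ha (hsub b c hb1 hc1)) (by norm_num))).add
      (psd_smul (conjpsd hb (hsub a c ha1 hc1)) (by norm_num))).add
      (psd_smul (conjpsd hc (hsub a b ha1 hb1)) (by norm_num))).add
      (psd_smul (conjpsd hd hs1) (by norm_num))).add
      (psd_smul (conjpsd hd ha1) (by norm_num))).add
      (psd_smul (conjpsd hd hb1) (by norm_num))).add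
      (psd_smul (conjpsd hd hc1) (by norm_num))).add
      (psd_smul hd (by norm_num)))
  -- lower certificate
  have idL : (2/9 : ℝ) • (1 : Matrix (Fin n) (Fin n) ℝ) + p =
      (1/72 : ℝ) • (((4:ℝ)•1 + (3:ℝ)•s - (9:ℝ)•a) * a * ((4:ℝ)•1 + (3:ℝ)•s - (9:ℝ)•a))
    + (1/72 : ℝ) • (((4:ℝ)•1 + (3:ℝ)•s - (9:ℝ)•b) * b * ((4:ℝ)•1 + (3:ℝ)•s - (9:ℝ)•b))
    + (1/72 : ℝ) • (((4:ℝ)•1 + (3:ℝ)•s - (9:ℝ)•c) * c * ((4:ℝ)•1 + (3:ℝ)•s - (9:ℝ)•c))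
    + (1/24 : ℝ) • (((3:ℝ)•a - s) * a * ((3:ℝ)•a - s))
    + (1/24 : ℝ) • (((3:ℝ)•b - s) * b * ((3:ℝ)•b - s))
    + (1/24 : ℝ) • (((3:ℝ)•c - s) * c * ((3:ℝ)•c - s))
    + (1/2 : ℝ) • ((s - a) * a * (s - a))
    + (1/2 : ℝ) • ((s - b) * b * (s - b))
    + (1/2 : ℝ) • ((s - c) * c * (s - c))
    + (2/9 : ℝ) • d
    + (1/3 : ℝ) • ((a - b) * d * (a - b))
    + (1/3 : ℝ) • ((a - c) * d * (a - c))
    + (1/3 : ℝ) • ((b - c) * d * (b - c)) := by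
    rw [hp_def, hd_def, hs_def]
    simp only [smul_mul_assoc, mul_smul_comm, add_mul, mul_add, sub_mul, mul_sub,
      smul_add, smul_sub, smul_smul, mul_one, one_mul]
    module
  have hL : ((2/9 : ℝ) • (1 : Matrix (Fin n) (Fin n) ℝ) + p).PosSemidef := by
    rw [idL]
    refine (((((((((((((psd_smul (conjpsd ha (hwa a ha1)) (by norm_num)).add
      (psd_smul (conjpsd hb (hwa b hb1)) (by norm_num))).add
      (psd_smul (conjpsd hc (hwa c hc1)) (by norm_num))).add
      (psd_smul (conjpsd ha (hua a ha1)) (by norm_num))).add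
      (psd_smul (conjpsd hb (hua b hb1)) (by norm_num))).add
      (psd_smul (conjpsd hc (hua c hc1)) (by norm_num))).add
      (psd_smul (conjpsd ha (hsub s a hs1 ha1)) (by norm_num))).add
      (psd_smul (conjpsd hb (hsub s b hs1 hb1)) (by norm_num))).add
      (psd_smul (conjpsd hc (hsub s c hs1 hc1)) (by norm_num))).add
      (psd_smul hd (by norm_num))).add
      (psd_smul (conjpsd hd (hsub a b ha1 hb1)) (by norm_num))).add
      (psd_smul (conjpsd hd (hsub a c ha1 hc1)) (by norm_num))).add
      (psd_smul (conjpsd hd (hsub b c hb1 hc1)) (by norm_num)))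
  -- quadratic form bounds
  have hUq : ∀ x : Fin n → ℝ, x ⬝ᵥ (p *ᵥ x) ≤ (2/9) * (x ⬝ᵥ x) := by
    intro x
    have := hU.dotProduct_mulVec_nonneg x
    simp only [star_trivial, sub_mulVec, smul_mulVec, one_mulVec,
      dotProduct_sub, dotProduct_smul, smul_eq_mul] at this
    linarith
  have hLq : ∀ x : Fin n → ℝ, -((2/9) * (x ⬝ᵥ x)) ≤ x ⬝ᵥ (p *ᵥ x) := by
    intro x
    have := hL.dotProduct_mulVec_nonneg x
    simp only [star_trivial, add_mulVec, smul_mulVec, one_mulVec,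
      dotProduct_add, dotProduct_smul, smul_eq_mul] at this
    linarith
  -- symmetry of p
  have hp1 : pᴴ = p := by
    rw [hp_def]
    simp only [conjTranspose_add, conjTranspose_mul, ha1, hb1, hc1, mul_assoc]
    abel
  have hpt : pᵀ = p := by rw [← hconv]; exact hp1
  have hsym : ∀ v w : Fin n → ℝ, v ⬝ᵥ (p *ᵥ w) = w ⬝ᵥ (p *ᵥ v) := by
    intro v w
    rw [dotProduct_mulVec]
    conv_lhs => rw [← hpt, vecMul_transpose]
    exact dotProduct_comm _ _
  -- operator norm bound
  apply opnorm_le_of _ (by norm_num)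
  intro x
  set y : Fin n → ℝ := p *ᵥ x with hy_def
  have key : y ⬝ᵥ y ≤ (4/81) * (x ⬝ᵥ x) := by
    have h1 := hUq (x + (9/2 : ℝ) • y)
    have h2 := hLq (x - (9/2 : ℝ) • y)
    have e1 : x ⬝ᵥ (p *ᵥ y) = y ⬝ᵥ y := by
      rw [hsym x y, ← hy_def]
    have e2 : y ⬝ᵥ (p *ᵥ x) = y ⬝ᵥ y := by rw [← hy_def]
    have e3 : x ⬝ᵥ y = y ⬝ᵥ x := dotProduct_comm _ _
    simp only [mulVec_add, mulVec_sub, mulVec_smul, dotProduct_add, dotProduct_sub,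
      add_dotProduct, sub_dotProduct, dotProduct_smul, smul_dotProduct, smul_eq_mul,
      ← hy_def, e1, e2, e3] at h1 h2
    linarith
  have hyx : env y ^ 2 ≤ ((2/9) * env x) ^ 2 := by
    rw [env_sq]
    have := env_sq x
    nlinarith [key, this]
  have : env y ≤ (2/9) * env x := by
    nlinarith [hyx, env_nonneg y, env_nonneg x]
  exact this

end Stmt10Helpers

open Matrix Stmt10Helpers in
theorem stmt10 {n : ℕ} (A : Fin 3 → Matrix (Fin n) (Fin n) ℝ)
    (hA : ∀ i, (A i).PosSemidef) :
    (1 / 27 : ℝ) * ‖∑ j₁ : Fin 3, ∑ j₂ : Fin 3, ∑ j₃ : Fin 3, A j₁ * A j₂ * A j₃‖ ≥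
      (1 / 6 : ℝ) *
        ‖∑ p ∈ Finset.univ.filter
            (fun p : Fin 3 × Fin 3 × Fin 3 => p.1 ≠ p.2.1 ∧ p.1 ≠ p.2.2 ∧ p.2.1 ≠ p.2.2),
          A p.1 * A p.2.1 * A p.2.2‖ := by
  have hfil : (∑ p ∈ Finset.univ.filter
        (fun p : Fin 3 × Fin 3 × Fin 3 => p.1 ≠ p.2.1 ∧ p.1 ≠ p.2.2 ∧ p.2.1 ≠ p.2.2),
      A p.1 * A p.2.1 * A p.2.2) =
      A 0 * A 1 * A 2 + A 0 * A 2 * A 1 + A 1 * A 0 * A 2 + A 1 * A 2 * A 0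
        + A 2 * A 0 * A 1 + A 2 * A 1 * A 0 := by
    rw [Finset.sum_filter]
    simp only [Fintype.sum_prod_type]
    simp only [Fin.sum_univ_three]
    norm_num
    abel
  have htrip : (∑ j₁ : Fin 3, ∑ j₂ : Fin 3, ∑ j₃ : Fin 3, A j₁ * A j₂ * A j₃) =
      (A 0 + A 1 + A 2) * ((A 0 + A 1 + A 2) * (A 0 + A 1 + A 2)) := by
    simp only [Fin.sum_univ_three, add_mul, mul_add, mul_assoc]
    abel
  rw [hfil, htrip]
  set S : Matrix (Fin n) (Fin n) ℝ := A 0 + A 1 + A 2 with hS_def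
  rcases eq_or_lt_of_le (norm_nonneg S) with hc | hc
  · -- ‖S‖ = 0 : all matrices vanish
    have hS0 : S = 0 := by
      have := hc.symm
      rwa [norm_eq_zero] at this
    have hzero : ∀ i : Fin 3, A i = 0 := by
      intro i
      have hq : ∀ x : Fin n → ℝ, (A i) *ᵥ x = 0 := by
        intro x
        have h0 := (hA 0).dotProduct_mulVec_nonneg x
        have h1 := (hA 1).dotProduct_mulVec_nonneg x
        have h2 := (hA 2).dotProduct_mulVec_nonneg x
        have hsum : star x ⬝ᵥ (A 0 *ᵥ x) + star x ⬝ᵥ (A 1 *ᵥ x) + star x ⬝ᵥ (A 2 *ᵥ x) = 0 := by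
          have : S *ᵥ x = 0 := by rw [hS0, Matrix.zero_mulVec]
          have h' : star x ⬝ᵥ (S *ᵥ x) = 0 := by rw [this, dotProduct_zero]
          rw [hS_def, Matrix.add_mulVec, Matrix.add_mulVec, dotProduct_add, dotProduct_add] at h'
          linarith
        have hz : star x ⬝ᵥ (A i *ᵥ x) = 0 := by
          fin_cases i
          · show star x ⬝ᵥ (A 0 *ᵥ x) = 0; linarith
          · show star x ⬝ᵥ (A 1 *ᵥ x) = 0; linarith
          · show star x ⬝ᵥ (A 2 *ᵥ x) = 0; linarith
        exact ((hA i).dotProduct_mulVec_zero_iff x).mp hz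
      ext k j
      have h := congrFun (hq (Pi.single j 1)) k
      simpa using h
    rw [hzero 0, hzero 1, hzero 2]
    simp only [zero_mul, mul_zero, add_zero, zero_add, norm_zero, mul_zero]
    positivity
  · -- ‖S‖ > 0 : rescale and apply the core bound
    set c : ℝ := ‖S‖ with hc_def
    have hcne : c ≠ 0 := ne_of_gt hc
    have hinv : (0:ℝ) ≤ c⁻¹ := inv_nonneg.mpr (le_of_lt hc)
    have hB0 := psd_smul (hA 0) hinv
    have hB1 := psd_smul (hA 1) hinv
    have hB2 := psd_smul (hA 2) hinv
    have hBsum : c⁻¹ • A 0 + c⁻¹ • A 1 + c⁻¹ • A 2 = c⁻¹ • S := by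
      rw [hS_def, smul_add, smul_add]
    have hBn : ‖c⁻¹ • A 0 + c⁻¹ • A 1 + c⁻¹ • A 2‖ ≤ 1 := by
      rw [hBsum, norm_smul, ← hc_def, Real.norm_eq_abs, abs_inv, abs_of_pos hc]
      rw [inv_mul_cancel₀ hcne]
    have hcore := core hB0 hB1 hB2 hBn
    -- relate the rescaled product sum to the original one
    have hPB : (c⁻¹ • A 0) * (c⁻¹ • A 1) * (c⁻¹ • A 2) + (c⁻¹ • A 0) * (c⁻¹ • A 2) * (c⁻¹ • A 1)
        + (c⁻¹ • A 1) * (c⁻¹ • A 0) * (c⁻¹ • A 2) + (c⁻¹ • A 1) * (c⁻¹ • A 2) * (c⁻¹ • A 0)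
        + (c⁻¹ • A 2) * (c⁻¹ • A 0) * (c⁻¹ • A 1) + (c⁻¹ • A 2) * (c⁻¹ • A 1) * (c⁻¹ • A 0)
        = (c⁻¹ * (c⁻¹ * c⁻¹)) •
          (A 0 * A 1 * A 2 + A 0 * A 2 * A 1 + A 1 * A 0 * A 2 + A 1 * A 2 * A 0
            + A 2 * A 0 * A 1 + A 2 * A 1 * A 0) := by
      simp only [smul_mul_assoc, mul_smul_comm, smul_smul, smul_add]
    rw [hPB] at hcore
    rw [norm_smul, Real.norm_eq_abs] at hcore
    have habs : |c⁻¹ * (c⁻¹ * c⁻¹)| = c⁻¹ * (c⁻¹ * c⁻¹) := by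
      apply abs_of_nonneg; positivity
    rw [habs] at hcore
    -- norm of S cubed from the C*-identity
    have hS1 : Sᴴ = S := by
      have h0 := (hA 0).1
      have h1 := (hA 1).1
      have h2 := (hA 2).1
      rw [hS_def, conjTranspose_add, conjTranspose_add, h0.eq, h1.eq, h2.eq]
    have k1 : ‖S * S‖ = c * c := by
      have := Matrix.l2_opNorm_conjTranspose_mul_self S
      rwa [hS1] at this
    have k2 : ‖(S * S) * (S * S)‖ = (c * c) * (c * c) := by
      have := Matrix.l2_opNorm_conjTranspose_mul_self (S * S)
      rw [conjTranspose_mul, hS1] at this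
      rw [this, k1]
    have k3 : ‖(S * S) * (S * S)‖ ≤ c * ‖S * (S * S)‖ := by
      rw [show (S * S) * (S * S) = S * (S * (S * S)) by noncomm_ring]
      exact Matrix.l2_opNorm_mul S (S * (S * S))
    have hS3 : c * (c * c) ≤ ‖S * (S * S)‖ := by
      rw [k2] at k3
      nlinarith [hc]
    -- conclude
    have hP6 : ‖A 0 * A 1 * A 2 + A 0 * A 2 * A 1 + A 1 * A 0 * A 2 + A 1 * A 2 * A 0
        + A 2 * A 0 * A 1 + A 2 * A 1 * A 0‖ ≤ 2/9 * (c * (c * c)) := by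
      have h' := mul_le_mul_of_nonneg_left hcore (show (0:ℝ) ≤ c * (c * c) by positivity)
      have e : (c * (c * c)) * ((c⁻¹ * (c⁻¹ * c⁻¹)) *
          ‖A 0 * A 1 * A 2 + A 0 * A 2 * A 1 + A 1 * A 0 * A 2 + A 1 * A 2 * A 0
            + A 2 * A 0 * A 1 + A 2 * A 1 * A 0‖) =
          ‖A 0 * A 1 * A 2 + A 0 * A 2 * A 1 + A 1 * A 0 * A 2 + A 1 * A 2 * A 0
            + A 2 * A 0 * A 1 + A 2 * A 1 * A 0‖ := by
        field_simp
      rw [mul_assoc] at h'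
      linarith [h', e]
    rw [ge_iff_le]
    linarith [hP6, hS3]
end

section
/- Let A₁, A₂, A₃ be symmetric positive semidefinite matrices with A₁ + A₂ + A₃ = I. Then the average over permutations of (A_{σ(1)} - A_{σ(3)}) A_{σ(2)} (A_{σ(1)} - A_{σ(3)}) equals the average over i of -A_i + 4A_i² - 3A_i³. -/
theorem stmt11 {n : ℕ} (A : Fin 3 → Matrix (Fin n) (Fin n) ℝ)
    (hA : ∀ i, (A i).PosSemidef)
    (hsum : A 0 + A 1 + A 2 = (1 : Matrix (Fin n) (Fin n) ℝ)) :
    (1 / 6 : ℝ) • ∑ σ : Equiv.Perm (Fin 3),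
        (A (σ 0) - A (σ 2)) * A (σ 1) * (A (σ 0) - A (σ 2)) =
      (1 / 3 : ℝ) • ∑ i : Fin 3, (-(A i) + (4 : ℝ) • (A i) ^ 2 - (3 : ℝ) • (A i) ^ 3) := by
  have h2 : A 2 = 1 - A 0 - A 1 := by
    rw [← hsum]; abel
  have huniv : (Finset.univ : Finset (Equiv.Perm (Fin 3))) =
      {1, Equiv.swap 0 1, Equiv.swap 0 2, Equiv.swap 1 2,
        Equiv.swap 0 1 * Equiv.swap 0 2, Equiv.swap 0 2 * Equiv.swap 0 1} := by decide
  rw [huniv, Fin.sum_univ_three]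
  rw [Finset.sum_insert (by decide), Finset.sum_insert (by decide),
    Finset.sum_insert (by decide), Finset.sum_insert (by decide),
    Finset.sum_insert (by decide), Finset.sum_singleton]
  simp only [Equiv.Perm.mul_apply, Equiv.swap_apply_def, Equiv.Perm.one_apply]
  norm_num [Fin.ext_iff]
  have h4 : ∀ X : Matrix (Fin n) (Fin n) ℝ, (4:ℝ) • X = X + X + X + X := by
    intro X; module
  have h3 : ∀ X : Matrix (Fin n) (Fin n) ℝ, (3:ℝ) • X = X + X + X := by
    intro X; module
  rw [h4, h4, h4, h3, h3, h3]
  have key : (A 0 - A 2) * A 1 * (A 0 - A 2) + ((A 1 - A 2) * A 0 * (A 1 - A 2) +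
      ((A 2 - A 0) * A 1 * (A 2 - A 0) + ((A 0 - A 1) * A 2 * (A 0 - A 1) +
      ((A 2 - A 1) * A 0 * (A 2 - A 1) + (A 1 - A 0) * A 2 * (A 1 - A 0))))) =
      (2 : ℝ) • (-A 0 + (A 0 ^ 2 + A 0 ^ 2 + A 0 ^ 2 + A 0 ^ 2) - (A 0 ^ 3 + A 0 ^ 3 + A 0 ^ 3) +
        (-A 1 + (A 1 ^ 2 + A 1 ^ 2 + A 1 ^ 2 + A 1 ^ 2) - (A 1 ^ 3 + A 1 ^ 3 + A 1 ^ 3)) +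
        (-A 2 + (A 2 ^ 2 + A 2 ^ 2 + A 2 ^ 2 + A 2 ^ 2) - (A 2 ^ 3 + A 2 ^ 3 + A 2 ^ 3))) := by
    rw [two_smul, h2]
    noncomm_ring
  linear_combination (norm := module) (1/6 : ℝ) • key
end

section
/- For any two symmetric positive semidefinite n×n matrices A₁, A₂, (1/4)‖(A₁+A₂)²‖ ≥ (1/2)‖A₁A₂ + A₂A₁‖, i.e., the noncommutative AM-GM inequality holds for n = m = 2. -/
open Matrix
open scoped Matrix.Norms.L2Operator RealInnerProductSpace

lemma opNorm_le_of_mulVec {n : Type*} [Fintype n] [DecidableEq n]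
    (A : Matrix n n ℝ) {c : ℝ} (hc : 0 ≤ c)
    (h : ∀ x : EuclideanSpace ℝ n,
      ‖(EuclideanSpace.equiv n ℝ).symm (A *ᵥ x)‖ ≤ c * ‖x‖) : ‖A‖ ≤ c := by
  rw [Matrix.l2_opNorm_def]
  exact ContinuousLinearMap.opNorm_le_bound _ hc fun x => h x

-- Euclidean norm of T_A v is at most ‖A‖ ‖v‖
lemma norm_toEuclideanLin_le {n : Type*} [Fintype n] [DecidableEq n]
    (A : Matrix n n ℝ) (v : EuclideanSpace ℝ n) :
    ‖Matrix.toEuclideanLin A v‖ ≤ ‖A‖ * ‖v‖ := by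
  have hx : (EuclideanSpace.equiv n ℝ).symm (A *ᵥ v) = Matrix.toEuclideanLin A v := rfl
  rw [← hx]
  exact Matrix.l2_opNorm_mulVec A v

-- inner with quadratic form vs dotProduct
lemma inner_toEuclideanLin {n : Type*} [Fintype n] [DecidableEq n]
    (A : Matrix n n ℝ) (v : EuclideanSpace ℝ n) :
    ⟪v, Matrix.toEuclideanLin A v⟫ =
      (star (WithLp.equiv 2 (n → ℝ) v)) ⬝ᵥ (A *ᵥ (WithLp.equiv 2 (n → ℝ) v)) := by
  simp [PiLp.inner_apply, Matrix.toEuclideanLin_apply, dotProduct, mul_comm]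

-- toEuclideanLin of a product
lemma toEuclideanLin_mul {n : Type*} [Fintype n] [DecidableEq n]
    (A B : Matrix n n ℝ) (v : EuclideanSpace ℝ n) :
    Matrix.toEuclideanLin (A * B) v =
      Matrix.toEuclideanLin A (Matrix.toEuclideanLin B v) := by
  simp [Matrix.toEuclideanLin_apply, Matrix.mulVec_mulVec]

lemma norm_le_of_unit_eigen {n : Type*} [Fintype n] [DecidableEq n]
    (M : Matrix n n ℝ) (hM : M.IsHermitian) {c : ℝ} (hc : 0 ≤ c)
    (h : ∀ (t : ℝ) (v : EuclideanSpace ℝ n), ‖v‖ = 1 →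
      Matrix.toEuclideanLin M v = t • v → |t| ≤ c) : ‖M‖ ≤ c := by
  have hT : (Matrix.toEuclideanLin M).IsSymmetric :=
    (Matrix.isHermitian_iff_isSymmetric).1 hM
  set N := Fintype.card n with hN
  have hn : Module.finrank ℝ (EuclideanSpace ℝ n) = N := finrank_euclideanSpace
  set B := hT.eigenvectorBasis hn with hB
  set μ := hT.eigenvalues hn with hμdef
  have hμ : ∀ i, |μ i| ≤ c := by
    intro i
    refine h (μ i) (B i) (B.orthonormal.1 i) ?_
    exact_mod_cast hT.apply_eigenvectorBasis hn i
  apply opNorm_le_of_mulVec _ hc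
  intro x
  have hx : (EuclideanSpace.equiv n ℝ).symm (M *ᵥ x) = Matrix.toEuclideanLin M x := rfl
  rw [hx, ← B.repr.norm_map (Matrix.toEuclideanLin M x), ← B.repr.norm_map x]
  rw [EuclideanSpace.norm_eq, EuclideanSpace.norm_eq]
  rw [← Real.sqrt_sq hc, ← Real.sqrt_mul (by positivity)]
  apply Real.sqrt_le_sqrt
  rw [Finset.mul_sum]
  apply Finset.sum_le_sum
  intro i _
  rw [hT.eigenvectorBasis_apply_self_apply hn x i]
  have := hμ i
  rw [Real.norm_eq_abs, Real.norm_eq_abs, abs_mul]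
  calc (|μ i| * |B.repr x i|) ^ 2 = |μ i|^2 * |B.repr x i|^2 := by ring
    _ ≤ c^2 * |B.repr x i|^2 := by
        have : |μ i|^2 ≤ c^2 := by nlinarith [abs_nonneg (μ i)]
        nlinarith [sq_nonneg (|B.repr x i|)]

theorem stmt19 {n : ℕ} (A₁ A₂ : Matrix (Fin n) (Fin n) ℝ)
    (hA₁ : A₁.PosSemidef) (hA₂ : A₂.PosSemidef) :
    (1 / 4 : ℝ) * ‖(A₁ + A₂) ^ 2‖ ≥ (1 / 2 : ℝ) * ‖A₁ * A₂ + A₂ * A₁‖ := by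
  set S := A₁ + A₂ with hSdef
  set D := A₁ - A₂ with hDdef
  set Q := A₁ * A₂ + A₂ * A₁ with hQdef
  have hS : S.IsHermitian := hA₁.1.add hA₂.1
  have hD : D.IsHermitian := hA₁.1.sub hA₂.1
  have hTS : (Matrix.toEuclideanLin S).IsSymmetric :=
    (Matrix.isHermitian_iff_isSymmetric).1 hS
  have hTD : (Matrix.toEuclideanLin D).IsSymmetric :=
    (Matrix.isHermitian_iff_isSymmetric).1 hD
  -- quadratic form of PSD matrices is nonneg
  have hq : ∀ (A : Matrix (Fin n) (Fin n) ℝ), A.PosSemidef →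
      ∀ v : EuclideanSpace ℝ (Fin n), 0 ≤ ⟪v, Matrix.toEuclideanLin A v⟫ := by
    intro A hA v
    rw [inner_toEuclideanLin]
    exact hA.dotProduct_mulVec_nonneg _
  -- the quadratic form of S bounds
  have hquadS : ∀ v : EuclideanSpace ℝ (Fin n), ‖v‖ = 1 →
      ⟪v, Matrix.toEuclideanLin S v⟫ ≤ ‖S‖ := by
    intro v hv
    calc ⟪v, Matrix.toEuclideanLin S v⟫ ≤ ‖v‖ * ‖Matrix.toEuclideanLin S v‖ :=
          real_inner_le_norm _ _
      _ ≤ ‖v‖ * (‖S‖ * ‖v‖) := by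
          have := norm_toEuclideanLin_le S v
          nlinarith [norm_nonneg v]
      _ = ‖S‖ := by rw [hv]; ring
  -- ‖D‖ ≤ ‖S‖
  have hDS : ‖D‖ ≤ ‖S‖ := by
    apply norm_le_of_unit_eigen D hD (norm_nonneg S)
    intro t v hv hev
    have ht : t = ⟪v, Matrix.toEuclideanLin D v⟫ := by
      rw [hev, real_inner_smul_right, real_inner_self_eq_norm_mul_norm, hv]
      ring
    have hsplitD : ⟪v, Matrix.toEuclideanLin D v⟫ =
        ⟪v, Matrix.toEuclideanLin A₁ v⟫ - ⟪v, Matrix.toEuclideanLin A₂ v⟫ := by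
      rw [hDdef, map_sub, LinearMap.sub_apply, inner_sub_right]
    have hsplitS : ⟪v, Matrix.toEuclideanLin S v⟫ =
        ⟪v, Matrix.toEuclideanLin A₁ v⟫ + ⟪v, Matrix.toEuclideanLin A₂ v⟫ := by
      rw [hSdef, map_add, LinearMap.add_apply, inner_add_right]
    have h1 := hq A₁ hA₁ v
    have h2 := hq A₂ hA₂ v
    have hup := hquadS v hv
    rw [abs_le]
    constructor <;> nlinarith
  -- M := S*S - D*D
  have hM : (S * S - D * D).IsHermitian := by
    have h1 : (S * S).IsHermitian := by
      unfold Matrix.IsHermitian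
      rw [Matrix.conjTranspose_mul, hS.eq]
    have h2 : (D * D).IsHermitian := by
      unfold Matrix.IsHermitian
      rw [Matrix.conjTranspose_mul, hD.eq]
    exact h1.sub h2
  have hMbound : ‖S * S - D * D‖ ≤ ‖S‖ ^ 2 := by
    apply norm_le_of_unit_eigen _ hM (by positivity)
    intro t v hv hev
    have ht : t = ⟪v, Matrix.toEuclideanLin (S * S - D * D) v⟫ := by
      rw [hev, real_inner_smul_right, real_inner_self_eq_norm_mul_norm, hv]
      ring
    have hsplit : ⟪v, Matrix.toEuclideanLin (S * S - D * D) v⟫ =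
        ‖Matrix.toEuclideanLin S v‖ ^ 2 - ‖Matrix.toEuclideanLin D v‖ ^ 2 := by
      rw [map_sub, LinearMap.sub_apply, inner_sub_right,
        toEuclideanLin_mul, toEuclideanLin_mul, ← hTS v _, ← hTD v _,
        real_inner_self_eq_norm_mul_norm, real_inner_self_eq_norm_mul_norm]
      ring
    have hSv : ‖Matrix.toEuclideanLin S v‖ ≤ ‖S‖ := by
      have := norm_toEuclideanLin_le S v
      rw [hv] at this; linarith
    have hDv : ‖Matrix.toEuclideanLin D v‖ ≤ ‖D‖ := by
      have := norm_toEuclideanLin_le D v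
      rw [hv] at this; linarith
    rw [abs_le]
    constructor <;>
      nlinarith [norm_nonneg (Matrix.toEuclideanLin S v),
        norm_nonneg (Matrix.toEuclideanLin D v), norm_nonneg S, norm_nonneg D]
  -- algebra: S*S - D*D = Q + Q
  have halg : S * S - D * D = Q + Q := by
    rw [hSdef, hDdef, hQdef]; noncomm_ring
  have hQQ : ‖Q + Q‖ = 2 * ‖Q‖ := by
    rw [← two_smul ℝ Q, norm_smul]
    simp
  have hSS : ‖S * S‖ = ‖S‖ ^ 2 := by
    have := Matrix.l2_opNorm_conjTranspose_mul_self S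
    rw [hS.eq] at this
    rw [this]; ring
  have hfinal : 2 * ‖Q‖ ≤ ‖S * S‖ := by
    rw [← hQQ, ← halg, hSS]
    exact hMbound
  have hpow : (A₁ + A₂) ^ 2 = S * S := by rw [hSdef, pow_two]
  rw [hpow]
  linarith
end
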